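/- If suf(i) is the largest L-suffix among all L-suffixes starting with a fixed character t, or the smallest LMS-suffix among all LMS-suffixes starting with t, then i > 1 implies T[i-1] ≠ t. -/

import Mathlib

variable {α : Type*}

/-- The suffix of `T` starting at (1-based) position `i`. -/
def Suf (T : List α) (i : ℕ) : List α := T.drop (i - 1)

/-- The (1-based) `i`-th character of `T`, i.e. the first character of `Suf T i`. -/
def Chr [Inhabited α] (T : List α) (i : ℕ) : α := (Suf T i).headI

/-- `Suf T i` is lexicographically smaller than `Suf T j`. -/
def SufLt [LT α] (T : List α) (i j : ℕ) : Prop := List.Lex (· < ·) (Suf T i) (Suf T j)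

/-- `Suf T i` is an S-suffix (position in range, and `i = N` or `suf i < suf (i+1)`). -/
def IsS [LinearOrder α] (T : List α) (i : ℕ) : Prop :=
  1 ≤ i ∧ i ≤ T.length ∧ (i = T.length ∨ SufLt T i (i + 1))

/-- `Suf T i` is an L-suffix (position in range and not an S-suffix). -/
def IsL [LinearOrder α] (T : List α) (i : ℕ) : Prop :=
  1 ≤ i ∧ i ≤ T.length ∧ ¬ (i = T.length ∨ SufLt T i (i + 1))

/-- `Suf T i` is an LMS-suffix: an S-suffix whose preceding suffix is an L-suffix. -/
def IsLMS [LinearOrder α] (T : List α) (i : ℕ) : Prop :=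
  1 < i ∧ IsS T i ∧ IsL T (i - 1)

/-- The last character of `T` is strictly smaller than every other character of `T`. -/
def LastSmallest [Inhabited α] [LinearOrder α] (T : List α) : Prop :=
  ∀ i, 1 ≤ i → i < T.length → Chr T T.length < Chr T i



private lemma suf_cons9 [Inhabited α] (T : List α) (i : ℕ) (h1 : 1 ≤ i) (h2 : i ≤ T.length) :
    Suf T i = Chr T i :: Suf T (i + 1) := by
  have hlt : i - 1 < T.length := by omega
  simp only [Suf, Chr]
  rw [List.drop_eq_getElem_cons hlt]
  have : i - 1 + 1 = i + 1 - 1 := by omega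
  rw [this]
  simp [List.drop_eq_getElem_cons hlt]

private lemma lex_total9 [LinearOrder α] (l1 l2 : List α) (h : l1 ≠ l2)
    (h2 : ¬ List.Lex (· < ·) l1 l2) : List.Lex (· < ·) l2 l1 := by
  rcases lt_trichotomy l1 l2 with h' | h' | h'
  · exact absurd h' h2
  · exact absurd h' h
  · exact h'

private lemma suf_ne9 [Inhabited α] (T : List α) (i j : ℕ) (h0 : 1 ≤ i) (hi : i ≤ T.length)
    (hij : i < j) : Suf T i ≠ Suf T j := by
  intro he
  have h2 := congrArg List.length he
  rw [Suf, Suf, List.length_drop, List.length_drop] at h2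
  omega

/-- If `suf i` is the lexicographically largest L-suffix starting with `t`, or the
lexicographically smallest LMS-suffix starting with `t`, then `i > 1` implies
`T[i-1] ≠ t`. -/
theorem stmt9 [Inhabited α] [LinearOrder α] (T : List α) (hlast : LastSmallest T)
    (i : ℕ) (t : α)
    (h : (IsL T i ∧ Chr T i = t ∧
            ∀ j, IsL T j → Chr T j = t → Suf T j = Suf T i ∨ SufLt T j i) ∨
         (IsLMS T i ∧ Chr T i = t ∧
            ∀ j, IsLMS T j → Chr T j = t → Suf T j = Suf T i ∨ SufLt T i j)) :
    1 < i → Chr T (i - 1) ≠ t := by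
  intro h1i heq
  rcases h with ⟨⟨hi1, hiN, hnot⟩, hchr, hmax⟩ |
    ⟨⟨h1i', ⟨hi1, hiN, hor⟩, ⟨hp1, hpN, hnotp⟩⟩, hchr, hmin⟩
  · -- largest L-suffix case
    push_neg at hnot
    obtain ⟨hne, hnlt⟩ := hnot
    have e1 : i - 1 + 1 = i := by omega
    have hconsi : Suf T i = t :: Suf T (i + 1) := by rw [suf_cons9 T i hi1 hiN, hchr]
    have hconsp : Suf T (i - 1) = t :: Suf T i := by
      rw [suf_cons9 T (i - 1) (by omega) (by omega), heq, e1]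
    -- suf(i-1) is an L-suffix
    have hLp : IsL T (i - 1) := by
      refine ⟨by omega, by omega, ?_⟩
      rintro (he | hlt)
      · omega
      · rw [SufLt, e1, hconsp, hconsi] at hlt
        apply hnlt
        rw [SufLt, hconsi]
        exact (List.lex_cons_iff).mp hlt
    rcases hmax (i - 1) hLp heq with he | hlt
    · exact suf_ne9 T (i - 1) i (by omega) (by omega) (by omega) he
    · rw [SufLt, hconsp, hconsi] at hlt
      apply hnlt
      rw [SufLt, hconsi]
      exact (List.lex_cons_iff).mp hlt
  · -- smallest LMS-suffix case
    rcases hor with he | hlt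
    · -- i = N : contradiction with LastSmallest
      have h2 := hlast (i - 1) (by omega) (by omega)
      rw [← he, hchr, heq] at h2
      exact lt_irrefl t h2
    · -- suf(i) < suf(i+1), so suf(i-1) < suf(i), contradicting IsL (i-1)
      apply hnotp
      right
      have e1 : i - 1 + 1 = i := by omega
      have hconsi : Suf T i = t :: Suf T (i + 1) := by rw [suf_cons9 T i hi1 hiN, hchr]
      have hconsp : Suf T (i - 1) = t :: Suf T i := by
        rw [suf_cons9 T (i - 1) (by omega) (by omega), heq, e1]
      have hlt' : List.Lex (· < ·) (t :: Suf T (i + 1)) (Suf T (i + 1)) := by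
        rw [← hconsi]; exact hlt
      rw [SufLt, e1, hconsp, hconsi]
      exact List.Lex.cons hlt'
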